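/- Let (α1,β1,γ1,δ1) and (α2,β2,γ2,δ2) be elements of (K^*)^3 × K. Then V'_1(α1,β1,γ1,δ1) is isomorphic to V'_1(α2,β2,γ2,δ2) as right U_q^+(B_2)-modules if and only if there exists an integer p with 0 ≤ p ≤ l-1 such that α1^l = α2^l, β1 = q^{-2p} β2, γ1 = γ2, and δ1 = δ2 + ((1-q^{-4p})/(1-q^{-4})) β2^2. -/

import Mathlib

noncomputable section

open MulOpposite

namespace Stmt17Aux

variable {K : Type*} [Field K]

theorem powModAux (ζ : K) {l : ℕ} (hζ : ζ ^ l = 1) (a : ℕ) : ζ ^ (a % l) = ζ ^ a := by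
  conv_rhs => rw [← Nat.div_add_mod a l]
  rw [pow_add, pow_mul, hζ, one_pow, one_mul]

theorem pow4_of_pow2 (x : K) {l : ℕ} (h : (x ^ 2) ^ l = 1) : (x ^ 4) ^ l = 1 := by
  rw [← pow_mul] at h ⊢
  rw [show 4 * l = 2 * l * 2 by ring, pow_mul, h, one_pow]

theorem endExt {l : ℕ} {g h : (Fin l → K) →ₗ[K] (Fin l → K)}
    (H : ∀ k, g (Pi.single k 1) = h (Pi.single k 1)) : g = h := by
  apply LinearMap.pi_ext'
  intro i
  refine LinearMap.ext fun c => ?_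
  have hc : Pi.single i c = c • (Pi.single i 1 : Fin l → K) := by
    funext j
    rcases eq_or_ne j i with h | h <;> simp [Pi.single_apply, h]
  simp only [LinearMap.comp_apply, LinearMap.coe_single, hc, map_smul, H]

theorem endApply {l : ℕ} (g : Module.End K (Fin l → K)) (F : (Fin l → K) → (Fin l → K))
    (hF : IsLinearMap K F) (h : ∀ k, g (Pi.single k 1) = F (Pi.single k 1)) (x : Fin l → K) :
    g x = F x := by
  have hg : g = hF.mk' F := endExt fun k => by rw [IsLinearMap.mk'_apply]; exact h k
  rw [hg, IsLinearMap.mk'_apply]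

theorem shiftApply {l : ℕ} (g : Module.End K (Fin l → K)) (σ : Equiv.Perm (Fin l))
    (c d : Fin l → K)
    (h : ∀ k, g (Pi.single k 1) =
      c k • (Pi.single (σ k) 1 : Fin l → K) + d k • (Pi.single k 1 : Fin l → K))
    (x : Fin l → K) (j : Fin l) :
    g x j = c (σ.symm j) * x (σ.symm j) + d j * x j := by
  have hF : IsLinearMap K
      (fun x : Fin l → K => fun j => c (σ.symm j) * x (σ.symm j) + d j * x j) := by
    constructor
    · intro a b; funext j; simp only [Pi.add_apply]; ring
    · intro r a; funext j; simp only [Pi.smul_apply, smul_eq_mul]; ring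
  refine congrFun (endApply g _ hF ?_ x) j
  intro k
  rw [h k]
  funext j
  simp only [Pi.add_apply, Pi.smul_apply, smul_eq_mul, Pi.single_apply, mul_ite, mul_one, mul_zero]
  rcases eq_or_ne j (σ k) with hj | hj
  · subst hj
    have hs : σ.symm (σ k) = k := Equiv.symm_apply_apply σ k
    simp only [hs, if_pos rfl]
    split_ifs <;> simp_all
  · have hsy : σ.symm j ≠ k := fun hc => hj (by rw [← hc, Equiv.apply_symm_apply])
    simp only [if_neg hj, if_neg hsy]
    split_ifs <;> simp_all

def Cc (q α β δ : K) (n : ℕ) : K :=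
  α⁻¹ * (δ + ((1 - q⁻¹ ^ (4 * n)) / (1 - q⁻¹ ^ 4)) * β ^ 2) * (q ^ (2 * n) * q⁻¹ ^ 2) * β⁻¹

def Dc (q β γ : K) (n : ℕ) : K := γ / (q ^ 2 - 1) * q ^ (2 * n) * β⁻¹

def Ec (q β : K) (n : ℕ) : K := q⁻¹ ^ (2 * n) * β

theorem Ec_mod {q : K} {l : ℕ} (h2 : (q⁻¹ ^ 2) ^ l = 1) (β : K) (n : ℕ) :
    Ec q β (n % l) = Ec q β n := by
  unfold Ec
  rw [pow_mul, pow_mul, powModAux _ h2]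

theorem Dc_mod {q : K} {l : ℕ} (h1 : (q ^ 2) ^ l = 1) (β γ : K) (n : ℕ) :
    Dc q β γ (n % l) = Dc q β γ n := by
  unfold Dc
  rw [pow_mul, pow_mul, powModAux _ h1]

theorem Cc_mod {q : K} {l : ℕ} (h1 : (q ^ 2) ^ l = 1) (h2 : (q⁻¹ ^ 2) ^ l = 1)
    (α β δ : K) (n : ℕ) : Cc q α β δ (n % l) = Cc q α β δ n := by
  unfold Cc
  rw [show ∀ a : ℕ, q ^ (2 * a) = (q ^ 2) ^ a from fun a => by rw [pow_mul],
    show ∀ a : ℕ, q⁻¹ ^ (4 * a) = (q⁻¹ ^ 4) ^ a from fun a => by rw [pow_mul],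
    powModAux _ h1, powModAux _ (pow4_of_pow2 _ h2), ← pow_mul, ← pow_mul]

theorem EcShift (q β2 : K) (p n : ℕ) :
    Ec q (q⁻¹ ^ (2 * p) * β2) n = Ec q β2 (n + p) := by
  unfold Ec
  rw [show 2 * (n + p) = 2 * n + 2 * p by ring, pow_add]
  ring

theorem DcShift {q β2 : K} (γ : K) (p n : ℕ) (hq0 : q ≠ 0) (hβ2 : β2 ≠ 0) :
    Dc q (q⁻¹ ^ (2 * p) * β2) γ n = Dc q β2 γ (n + p) := by
  unfold Dc
  simp only [inv_pow]
  rw [show 2 * (n + p) = 2 * n + 2 * p by ring, pow_add]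
  field_simp

theorem CcShift {q β2 : K} (α1 α2 δ2 : K) (p n : ℕ) (hq0 : q ≠ 0)
    (hα1 : α1 ≠ 0) (hα2 : α2 ≠ 0) (hβ2 : β2 ≠ 0) (h4 : 1 - q⁻¹ ^ 4 ≠ 0) :
    α1 * Cc q α1 (q⁻¹ ^ (2 * p) * β2) (δ2 + ((1 - q⁻¹ ^ (4 * p)) / (1 - q⁻¹ ^ 4)) * β2 ^ 2) n
      = α2 * Cc q α2 β2 δ2 (n + p) := by
  unfold Cc
  rw [mul_inv, show ((q⁻¹ ^ (2 * p) : K))⁻¹ = q ^ (2 * p) by rw [inv_pow, inv_inv]]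
  rw [show 4 * (n + p) = 4 * n + 4 * p by ring, show 2 * (n + p) = 2 * n + 2 * p by ring,
    pow_add, pow_add]
  generalize q⁻¹ = r at h4 ⊢
  field_simp
  ring

theorem Cc_injδ {q α β δ δ' : K} (n : ℕ) (hq0 : q ≠ 0) (hα : α ≠ 0) (hβ : β ≠ 0)
    (h : Cc q α β δ n = Cc q α β δ' n) : δ = δ' := by
  unfold Cc at h
  have hP : (q ^ (2 * n) * q⁻¹ ^ 2 : K) ≠ 0 :=
    mul_ne_zero (pow_ne_zero _ hq0) (pow_ne_zero _ (inv_ne_zero hq0))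
  have h1 := mul_right_cancel₀ (inv_ne_zero hβ) h
  have h2 := mul_right_cancel₀ hP h1
  have h3 := mul_left_cancel₀ (inv_ne_zero hα) h2
  exact add_right_cancel h3

end Stmt17Aux


/-- The defining relations of `U_q^+(B_2)` on the free algebra on generators
`e1 = ι 0`, `e2 = ι 1`, `e3 = ι 2`, `z = ι 3`. -/
inductive UqB2Rel (K : Type*) [Field K] (q : K) :
    FreeAlgebra K (Fin 4) → FreeAlgebra K (Fin 4) → Prop
  | e1z : UqB2Rel K q (FreeAlgebra.ι K 0 * FreeAlgebra.ι K 3)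
      (FreeAlgebra.ι K 3 * FreeAlgebra.ι K 0)
  | e2z : UqB2Rel K q (FreeAlgebra.ι K 1 * FreeAlgebra.ι K 3)
      (FreeAlgebra.ι K 3 * FreeAlgebra.ι K 1)
  | e3z : UqB2Rel K q (FreeAlgebra.ι K 2 * FreeAlgebra.ι K 3)
      (FreeAlgebra.ι K 3 * FreeAlgebra.ι K 2)
  | e1e3 : UqB2Rel K q (FreeAlgebra.ι K 0 * FreeAlgebra.ι K 2)
      (q⁻¹ ^ 2 • (FreeAlgebra.ι K 2 * FreeAlgebra.ι K 0))
  | e2e3 : UqB2Rel K q (FreeAlgebra.ι K 1 * FreeAlgebra.ι K 2)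
      (q ^ 2 • (FreeAlgebra.ι K 2 * FreeAlgebra.ι K 1) + FreeAlgebra.ι K 3)
  | e2e1 : UqB2Rel K q (FreeAlgebra.ι K 1 * FreeAlgebra.ι K 0)
      (q⁻¹ ^ 2 • (FreeAlgebra.ι K 0 * FreeAlgebra.ι K 1) - q⁻¹ ^ 2 • FreeAlgebra.ι K 2)

/-- `U_q^+(B_2)`, presented by generators `e1, e2, e3, z` and the relations above. -/
abbrev UqB2 (K : Type*) [Field K] (q : K) : Type _ := RingQuot (UqB2Rel K q)

variable (K : Type*) [Field K] (q : K)

/-- The generator `e1` of `U_q^+(B_2)`. -/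
def Ue1 : UqB2 K q := RingQuot.mkAlgHom K (UqB2Rel K q) (FreeAlgebra.ι K 0)
/-- The generator `e2` of `U_q^+(B_2)`. -/
def Ue2 : UqB2 K q := RingQuot.mkAlgHom K (UqB2Rel K q) (FreeAlgebra.ι K 1)
/-- The generator `e3` of `U_q^+(B_2)`. -/
def Ue3 : UqB2 K q := RingQuot.mkAlgHom K (UqB2Rel K q) (FreeAlgebra.ι K 2)
/-- The generator `z` of `U_q^+(B_2)`. -/
def Uz : UqB2 K q := RingQuot.mkAlgHom K (UqB2Rel K q) (FreeAlgebra.ι K 3)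


/-- A right `U_q^+(B_2)`-module structure `ρ` on the `K`-vector space with basis
`v_0, …, v_{l-1}` realizes `V'_1(α,β,γ,δ)` if the generators act on the basis by the
defining formulas of `V'_1(α,β,γ,δ)`. -/
def IsV1Rep (l : ℕ) (α β γ δ : K)
    (ρ : UqB2 K q →ₐ[K] (Module.End K (Fin l → K))ᵐᵒᵖ) : Prop :=
  (∀ k : Fin l, (ρ (Ue1 K q)).unop (Pi.single k 1) =
    α • (Pi.single (finRotate l k) 1 : Fin l → K)) ∧
  (∀ k : Fin l, (ρ (Ue2 K q)).unop (Pi.single k 1) =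
    (α⁻¹ * (δ + ((1 - q⁻¹ ^ (4 * (k : ℕ))) / (1 - q⁻¹ ^ 4)) * β ^ 2) *
        (q ^ (2 * (k : ℕ)) * q⁻¹ ^ 2) * β⁻¹) •
        (Pi.single ((finRotate l).symm k) 1 : Fin l → K) -
      (γ / (q ^ 2 - 1) * q ^ (2 * (k : ℕ)) * β⁻¹) • (Pi.single k 1 : Fin l → K)) ∧
  (∀ k : Fin l, (ρ (Ue3 K q)).unop (Pi.single k 1) =
    (q⁻¹ ^ (2 * (k : ℕ)) * β) • (Pi.single k 1 : Fin l → K)) ∧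
  (∀ k : Fin l, (ρ (Uz K q)).unop (Pi.single k 1) = γ • (Pi.single k 1 : Fin l → K))


theorem isV1Rep_apply {l : ℕ} {α β γ δ : K}
    {ρ : UqB2 K q →ₐ[K] (Module.End K (Fin l → K))ᵐᵒᵖ}
    (h : IsV1Rep K q l α β γ δ ρ) :
    (∀ (x : Fin l → K) (j : Fin l),
        (ρ (Ue1 K q)).unop x j = α * x ((finRotate l).symm j)) ∧
    (∀ (x : Fin l → K) (j : Fin l),
        (ρ (Ue2 K q)).unop x j =
          Stmt17Aux.Cc q α β δ ((finRotate l j : Fin l) : ℕ) * x (finRotate l j)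
            + (-(Stmt17Aux.Dc q β γ (j : ℕ))) * x j) ∧
    (∀ (x : Fin l → K) (j : Fin l),
        (ρ (Ue3 K q)).unop x j = Stmt17Aux.Ec q β (j : ℕ) * x j) ∧
    (∀ (x : Fin l → K) (j : Fin l), (ρ (Uz K q)).unop x j = γ * x j) := by
  obtain ⟨A1, A2, A3, A4⟩ := h
  refine ⟨?_, ?_, ?_, ?_⟩
  · intro x j
    have := Stmt17Aux.shiftApply ((ρ (Ue1 K q)).unop) (finRotate l) (fun _ => α) (fun _ => 0)
      (fun k => by rw [A1 k]; simp) x j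
    simpa using this
  · intro x j
    have := Stmt17Aux.shiftApply ((ρ (Ue2 K q)).unop) (finRotate l).symm
      (fun k => Stmt17Aux.Cc q α β δ (k : ℕ)) (fun k => -(Stmt17Aux.Dc q β γ (k : ℕ)))
      (fun k => by rw [A2 k, sub_eq_add_neg, ← neg_smul]; rfl) x j
    simpa [Equiv.symm_symm] using this
  · intro x j
    have := Stmt17Aux.shiftApply ((ρ (Ue3 K q)).unop) (Equiv.refl (Fin l))
      (fun k => Stmt17Aux.Ec q β (k : ℕ)) (fun _ => 0)
      (fun k => by rw [A3 k]; simp only [Equiv.refl_apply, zero_smul, add_zero]; rfl) x j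
    simpa using this
  · intro x j
    have := Stmt17Aux.shiftApply ((ρ (Uz K q)).unop) (Equiv.refl (Fin l))
      (fun _ => γ) (fun _ => 0) (fun k => by rw [A4 k]; simp) x j
    simpa using this

open scoped Fin.CommRing Fin.NatCast

/-- For `(α1,β1,γ1,δ1), (α2,β2,γ2,δ2) ∈ (K^*)^3 × K`, the modules
`V'_1(α1,β1,γ1,δ1)` and `V'_1(α2,β2,γ2,δ2)` are isomorphic as right `U_q^+(B_2)`-modules
iff there is `0 ≤ p ≤ l-1` with `α1^l = α2^l`, `β1 = q^{-2p} β2`, `γ1 = γ2` and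
`δ1 = δ2 + ((1-q^{-4p})/(1-q^{-4})) β2^2`. -/
theorem stmt17 (m : ℕ) (hm : 5 ≤ m) (hq : IsPrimitiveRoot q m)
    (l : ℕ) (hl : l = if Odd m then m else m / 2)
    (α1 β1 γ1 δ1 α2 β2 γ2 δ2 : K)
    (hα1 : α1 ≠ 0) (hβ1 : β1 ≠ 0) (hγ1 : γ1 ≠ 0)
    (hα2 : α2 ≠ 0) (hβ2 : β2 ≠ 0) (hγ2 : γ2 ≠ 0)
    (ρ1 ρ2 : UqB2 K q →ₐ[K] (Module.End K (Fin l → K))ᵐᵒᵖ)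
    (h1 : IsV1Rep K q l α1 β1 γ1 δ1 ρ1) (h2 : IsV1Rep K q l α2 β2 γ2 δ2 ρ2) :
    (∃ f : (Fin l → K) ≃ₗ[K] (Fin l → K),
        ∀ u : UqB2 K q, ∀ x : Fin l → K, f ((ρ1 u).unop x) = (ρ2 u).unop (f x)) ↔
      ∃ p : ℕ, p ≤ l - 1 ∧ α1 ^ l = α2 ^ l ∧ β1 = q⁻¹ ^ (2 * p) * β2 ∧ γ1 = γ2 ∧
        δ1 = δ2 + ((1 - q⁻¹ ^ (4 * p)) / (1 - q⁻¹ ^ 4)) * β2 ^ 2 := by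
  -- basic facts
  have hm0 : m ≠ 0 := by omega
  have hqm : q ^ m = 1 := hq.pow_eq_one
  have hq0 : q ≠ 0 := by
    intro h; rw [h, zero_pow hm0] at hqm; exact zero_ne_one hqm
  have hl3 : 3 ≤ l := by
    rw [hl]; split_ifs with h
    · omega
    · have := Nat.not_odd_iff.mp h
      omega
  obtain ⟨n, rfl⟩ : ∃ n, l = n + 3 := ⟨l - 3, by omega⟩
  have hprim2 : IsPrimitiveRoot (q ^ 2) (n + 3) := by
    rw [hl]
    rw [hl] at hl3
    split_ifs with h
    · split_ifs at hl3
      exact hq.pow_of_coprime 2 (Nat.coprime_two_left.mpr h)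
    · split_ifs at hl3
      refine hq.pow (by omega) ?_
      have := Nat.not_odd_iff.mp h
      omega
  have hpriminv : IsPrimitiveRoot (q⁻¹ ^ 2) (n + 3) := by
    simpa [inv_pow] using hprim2.inv
  have h2l : (q ^ 2) ^ (n + 3) = 1 := hprim2.pow_eq_one
  have h2linv : (q⁻¹ ^ 2) ^ (n + 3) = 1 := hpriminv.pow_eq_one
  have hq4 : (q : K) ^ 4 ≠ 1 := by
    intro h
    have := Nat.le_of_dvd (by norm_num) (hq.dvd_of_pow_eq_one 4 h)
    omega
  have hq4inv : (q⁻¹ : K) ^ 4 ≠ 1 := by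
    intro h
    rw [inv_pow, inv_eq_one] at h
    exact hq4 h
  have h1mu4 : (1 : K) - q⁻¹ ^ 4 ≠ 0 := sub_ne_zero.mpr (Ne.symm hq4inv)
  have hσ : ∀ k : Fin (n + 3), finRotate (n + 3) k = k + 1 := finRotate_succ_apply
  have hσs : ∀ k : Fin (n + 3), (finRotate (n + 3)).symm k = k - 1 := by
    intro k
    rw [Equiv.symm_apply_eq, hσ, sub_add_cancel]
  have hval : ∀ a b : Fin (n + 3), ((a + b : Fin (n + 3)) : ℕ) = ((a : ℕ) + (b : ℕ)) % (n + 3) :=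
    fun a b => Fin.val_add a b
  have honeval : ((1 : Fin (n + 3)) : ℕ) = 1 := rfl
  have hone_ne : (1 : Fin (n + 3)) ≠ 0 := by
    intro h
    have := congrArg Fin.val h
    simp [honeval] at this
  obtain ⟨a1, a2, a3, az⟩ := isV1Rep_apply K q h1
  obtain ⟨b1, b2, b3, bz⟩ := isV1Rep_apply K q h2
  have h12 : ∀ k : Fin (n + 3), (ρ1 (Ue2 K q)).unop (Pi.single k 1) =
      Stmt17Aux.Cc q α1 β1 δ1 (k : ℕ) •
        (Pi.single ((finRotate (n + 3)).symm k) 1 : Fin (n + 3) → K)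
        - Stmt17Aux.Dc q β1 γ1 (k : ℕ) • (Pi.single k 1 : Fin (n + 3) → K) := fun k => h1.2.1 k
  have h13 : ∀ k : Fin (n + 3), (ρ1 (Ue3 K q)).unop (Pi.single k 1) =
      Stmt17Aux.Ec q β1 (k : ℕ) • (Pi.single k 1 : Fin (n + 3) → K) := fun k => h1.2.2.1 k
  constructor
  · rintro ⟨f, hf⟩
    have hsingle_ne : ∀ k : Fin (n + 3), (Pi.single k 1 : Fin (n + 3) → K) ≠ 0 := by
      intro k h
      have := congrFun h k
      rw [Pi.single_eq_same] at this
      exact one_ne_zero this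
    have hex : ∀ k : Fin (n + 3), ∃ j, f (Pi.single k 1) j ≠ 0 := by
      intro k
      by_contra hc
      push_neg at hc
      exact hsingle_ne k (f.map_eq_zero_iff.mp (funext hc))
    obtain ⟨j0, hj0⟩ := hex 0
    -- γ1 = γ2
    have hγ : γ1 = γ2 := by
      have e := congrFun (hf (Uz K q) (Pi.single 0 1)) j0
      rw [h1.2.2.2 0, map_smul] at e
      rw [bz (f (Pi.single 0 1)) j0] at e
      rw [Pi.smul_apply, smul_eq_mul] at e
      exact mul_right_cancel₀ hj0 e
    -- e3 eigenvalue equation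
    have key : ∀ (k j : Fin (n + 3)),
        Stmt17Aux.Ec q β2 (j : ℕ) * f (Pi.single k 1) j
          = Stmt17Aux.Ec q β1 (k : ℕ) * f (Pi.single k 1) j := by
      intro k j
      have e := congrFun (hf (Ue3 K q) (Pi.single k 1)) j
      rw [h13 k, map_smul] at e
      rw [b3 (f (Pi.single k 1)) j] at e
      rw [Pi.smul_apply, smul_eq_mul] at e
      exact e.symm
    -- find p
    have hβ : β1 = q⁻¹ ^ (2 * (j0 : ℕ)) * β2 := by
      have h0 := mul_right_cancel₀ hj0 (key 0 j0)
      rw [show Stmt17Aux.Ec q β1 ((0 : Fin (n + 3)) : ℕ) = β1 by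
        simp [Stmt17Aux.Ec]] at h0
      rw [← h0]
      rfl
    -- support of f (single k 1)
    have hEinj : ∀ (k j : Fin (n + 3)),
        Stmt17Aux.Ec q β2 (j : ℕ) = Stmt17Aux.Ec q β1 (k : ℕ) → j = k + j0 := by
      intro k j hE
      rw [hβ, Stmt17Aux.EcShift] at hE
      have hp2 : (q⁻¹ ^ 2 : K) ^ (j : ℕ) = (q⁻¹ ^ 2) ^ (((k : ℕ) + (j0 : ℕ)) % (n + 3)) := by
        rw [Stmt17Aux.powModAux _ h2linv]
        have := mul_right_cancel₀ hβ2 hE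
        rwa [pow_mul, pow_mul] at this
      have := hpriminv.pow_inj j.isLt (Nat.mod_lt _ (by omega)) hp2
      exact Fin.ext (by rw [this, hval])
    have hsupp : ∀ (k j : Fin (n + 3)), j ≠ k + j0 → f (Pi.single k 1) j = 0 := by
      intro k j hne
      by_contra hx
      exact hne (hEinj k j (mul_right_cancel₀ hx (key k j)))
    set lam : Fin (n + 3) → K := fun k => f (Pi.single k 1) (k + j0) with hlamdef
    have hlam : ∀ k, lam k ≠ 0 := by
      intro k hk
      obtain ⟨j, hj⟩ := hex k
      rcases eq_or_ne j (k + j0) with rfl | hne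
      · exact hj hk
      · exact hj (hsupp k j hne)
    -- e1 relation
    have star : ∀ k : Fin (n + 3), α1 * lam (k + 1) = α2 * lam k := by
      intro k
      have e := congrFun (hf (Ue1 K q) (Pi.single k 1)) (k + 1 + j0)
      rw [h1.1 k, map_smul, hσ k] at e
      rw [b1 (f (Pi.single k 1)) (k + 1 + j0), hσs] at e
      rw [show k + 1 + j0 - 1 = k + j0 by ring] at e
      rw [Pi.smul_apply, smul_eq_mul] at e
      exact e
    -- α1 ^ l = α2 ^ l
    have haux : ∀ nn : ℕ, α1 ^ nn * lam ((nn : Fin (n + 3))) = α2 ^ nn * lam 0 := by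
      intro nn
      induction nn with
      | zero => norm_num
      | succ t ih =>
        have hcast : ((t + 1 : ℕ) : Fin (n + 3)) = ((t : ℕ) : Fin (n + 3)) + 1 := by
          push_cast; ring
        calc α1 ^ (t + 1) * lam ((t + 1 : ℕ) : Fin (n + 3))
            = α1 ^ t * (α1 * lam (((t : ℕ) : Fin (n + 3)) + 1)) := by rw [hcast, pow_succ]; ring
          _ = α1 ^ t * (α2 * lam ((t : ℕ) : Fin (n + 3))) := by rw [star]
          _ = α2 * (α1 ^ t * lam ((t : ℕ) : Fin (n + 3))) := by ring
          _ = α2 * (α2 ^ t * lam 0) := by rw [ih]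
          _ = α2 ^ (t + 1) * lam 0 := by rw [pow_succ]; ring
    have hα : α1 ^ (n + 3) = α2 ^ (n + 3) := by
      have h := haux (n + 3)
      rw [Fin.natCast_self] at h
      exact mul_right_cancel₀ (hlam 0) h
    -- e2 relation at k = 1
    have e := congrFun (hf (Ue2 K q) (Pi.single (1 : Fin (n + 3)) 1)) j0
    rw [h12 1, map_sub, map_smul, map_smul] at e
    rw [hσs 1, show (1 : Fin (n + 3)) - 1 = 0 by ring] at e
    rw [b2 (f (Pi.single 1 1)) j0, hσ j0] at e
    rw [Pi.sub_apply, Pi.smul_apply, Pi.smul_apply, smul_eq_mul, smul_eq_mul] at e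
    have hz1 : f (Pi.single (1 : Fin (n + 3)) 1) j0 = 0 := by
      refine hsupp 1 j0 ?_
      intro hcontra
      apply hone_ne
      have : (0 : Fin (n + 3)) + j0 = 1 + j0 := by rw [zero_add]; exact hcontra
      exact (add_right_cancel this).symm
    have hz2 : f (Pi.single (0 : Fin (n + 3)) 1) j0 = lam 0 := by
      rw [hlamdef]; simp only []
      rw [zero_add]
    have hz3 : f (Pi.single (1 : Fin (n + 3)) 1) (j0 + 1) = lam 1 := by
      rw [hlamdef]; simp only []
      rw [add_comm j0 1]
    rw [hz1, hz2, hz3] at e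
    rw [mul_zero, sub_zero, mul_zero, add_zero] at e
    rw [honeval] at e
    rw [show ((j0 + 1 : Fin (n + 3)) : ℕ) = ((j0 : ℕ) + 1) % (n + 3) by rw [hval, honeval]] at e
    rw [Stmt17Aux.Cc_mod h2l h2linv] at e
    have Hc : α1 * Stmt17Aux.Cc q α1 β1 δ1 1 = α2 * Stmt17Aux.Cc q α2 β2 δ2 ((j0 : ℕ) + 1) := by
      have hst := star 0
      rw [zero_add] at hst
      have h3 : (α1 * Stmt17Aux.Cc q α1 β1 δ1 1) * lam 0
          = (α2 * Stmt17Aux.Cc q α2 β2 δ2 ((j0 : ℕ) + 1)) * lam 0 := by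
        calc (α1 * Stmt17Aux.Cc q α1 β1 δ1 1) * lam 0
            = α1 * (Stmt17Aux.Cc q α1 β1 δ1 1 * lam 0) := by ring
          _ = α1 * (Stmt17Aux.Cc q α2 β2 δ2 ((j0 : ℕ) + 1) * lam 1) := by rw [e]
          _ = Stmt17Aux.Cc q α2 β2 δ2 ((j0 : ℕ) + 1) * (α1 * lam 1) := by ring
          _ = Stmt17Aux.Cc q α2 β2 δ2 ((j0 : ℕ) + 1) * (α2 * lam 0) := by rw [hst]
          _ = _ := by ring
      exact mul_right_cancel₀ (hlam 0) h3
    have hδ : δ1 = δ2 + ((1 - q⁻¹ ^ (4 * (j0 : ℕ))) / (1 - q⁻¹ ^ 4)) * β2 ^ 2 := by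
      have h4' := Stmt17Aux.CcShift (q := q) (β2 := β2) α1 α2 δ2 (j0 : ℕ) 1 hq0 hα1 hα2 hβ2 h1mu4
      rw [← hβ, show 1 + (j0 : ℕ) = (j0 : ℕ) + 1 by ring] at h4'
      have hcomb := Hc.trans h4'.symm
      exact Stmt17Aux.Cc_injδ 1 hq0 hα1 hβ1 (mul_left_cancel₀ hα1 hcomb)
    exact ⟨(j0 : ℕ), by omega, hα, hβ, hγ, hδ⟩
  · rintro ⟨p, hple, hα, hβ, hγ, hδ⟩
    have hplt : p < n + 3 := by omega
    set pf : Fin (n + 3) := ⟨p, hplt⟩ with hpfdef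
    have hvalpf : (pf : ℕ) = p := rfl
    set lam : Fin (n + 3) → K := fun k => (α2 * α1⁻¹) ^ (k : ℕ) with hlamdef
    have hlam : ∀ k, lam k ≠ 0 := fun k =>
      pow_ne_zero _ (mul_ne_zero hα2 (inv_ne_zero hα1))
    have star : ∀ k : Fin (n + 3), α1 * lam (k + 1) = α2 * lam k := by
      intro k
      have hvk : ((k + 1 : Fin (n + 3)) : ℕ) = ((k : ℕ) + 1) % (n + 3) := by
        rw [hval, honeval]
      rcases lt_or_ge ((k : ℕ) + 1) (n + 3) with h | h
      · rw [Nat.mod_eq_of_lt h] at hvk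
        rw [hlamdef]; simp only []
        rw [hvk, pow_succ]
        field_simp
      · have hk : (k : ℕ) = n + 2 := by have := k.isLt; omega
        have h0 : ((k : ℕ) + 1) % (n + 3) = 0 := by rw [hk]; exact Nat.mod_self (n + 3)
        rw [h0] at hvk
        rw [hlamdef]; simp only []
        rw [hvk, hk, pow_zero, mul_one]
        have hpow : (α2 * α1⁻¹) ^ (n + 3) = 1 := by
          rw [mul_pow, ← hα, inv_pow, mul_inv_cancel₀ (pow_ne_zero _ hα1)]
        calc α1 = α1 * (α2 * α1⁻¹) ^ (n + 3) := by rw [hpow, mul_one]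
          _ = α2 * (α2 * α1⁻¹) ^ (n + 2) := by
              rw [pow_succ]
              field_simp
    have hvadd : ∀ k : Fin (n + 3), ((k + pf : Fin (n + 3)) : ℕ) = ((k : ℕ) + p) % (n + 3) := by
      intro k; rw [hval, hvalpf]
    have IE : ∀ k : Fin (n + 3),
        Stmt17Aux.Ec q β1 (k : ℕ) = Stmt17Aux.Ec q β2 ((k + pf : Fin (n + 3)) : ℕ) := by
      intro k
      rw [hvadd, Stmt17Aux.Ec_mod h2linv, hβ, Stmt17Aux.EcShift]
    have IC : ∀ k : Fin (n + 3),
        α1 * Stmt17Aux.Cc q α1 β1 δ1 (k : ℕ)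
          = α2 * Stmt17Aux.Cc q α2 β2 δ2 ((k + pf : Fin (n + 3)) : ℕ) := by
      intro k
      rw [hvadd, Stmt17Aux.Cc_mod h2l h2linv, hβ, hδ]
      exact Stmt17Aux.CcShift α1 α2 δ2 p (k : ℕ) hq0 hα1 hα2 hβ2 h1mu4
    have ID : ∀ k : Fin (n + 3),
        Stmt17Aux.Dc q β1 γ1 (k : ℕ) = Stmt17Aux.Dc q β2 γ2 ((k + pf : Fin (n + 3)) : ℕ) := by
      intro k
      rw [hvadd, Stmt17Aux.Dc_mod h2l, hβ, hγ, Stmt17Aux.DcShift γ2 p (k : ℕ) hq0 hβ2]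
    refine ⟨{ toFun := fun x j => lam (j - pf) * x (j - pf)
              map_add' := by intro x y; funext j; simp only [Pi.add_apply]; ring
              map_smul' := by
                intro r x; funext j
                simp only [Pi.smul_apply, smul_eq_mul, RingHom.id_apply]
                ring
              invFun := fun y k => (lam k)⁻¹ * y (k + pf)
              left_inv := by
                intro x; funext k
                simp only []
                rw [add_sub_cancel_right, inv_mul_cancel_left₀ (hlam k)]
              right_inv := by
                intro y; funext j
                simp only []
                rw [sub_add_cancel, mul_inv_cancel_left₀ (hlam _)] }, ?_⟩
    set F : (Fin (n + 3) → K) ≃ₗ[K] (Fin (n + 3) → K) :=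
      { toFun := fun x j => lam (j - pf) * x (j - pf)
        map_add' := by intro x y; funext j; simp only [Pi.add_apply]; ring
        map_smul' := by
          intro r x; funext j
          simp only [Pi.smul_apply, smul_eq_mul, RingHom.id_apply]
          ring
        invFun := fun y k => (lam k)⁻¹ * y (k + pf)
        left_inv := by
          intro x; funext k
          simp only []
          rw [add_sub_cancel_right, inv_mul_cancel_left₀ (hlam k)]
        right_inv := by
          intro y; funext j
          simp only []
          rw [sub_add_cancel, mul_inv_cancel_left₀ (hlam _)] } with hFdef
    have hFapp : ∀ (y : Fin (n + 3) → K) (j : Fin (n + 3)),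
        F y j = lam (j - pf) * y (j - pf) := fun _ _ => rfl
    have gen1 : ∀ x, F ((ρ1 (Ue1 K q)).unop x) = (ρ2 (Ue1 K q)).unop (F x) := by
      intro x; funext j
      rw [hFapp, a1, b1, hFapp, hσs, hσs]
      rw [show j - pf - 1 = j - 1 - pf by ring]
      have hs := star (j - 1 - pf)
      rw [show j - 1 - pf + 1 = j - pf by ring] at hs
      linear_combination x (j - 1 - pf) * hs
    have gen2 : ∀ x, F ((ρ1 (Ue2 K q)).unop x) = (ρ2 (Ue2 K q)).unop (F x) := by
      intro x; funext j
      rw [hFapp, a2, b2, hFapp, hFapp, hσ (j - pf), hσ j]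
      rw [show j + 1 - pf = j - pf + 1 by ring]
      have hD : Stmt17Aux.Dc q β1 γ1 ((j - pf : Fin (n + 3)) : ℕ)
          = Stmt17Aux.Dc q β2 γ2 (j : ℕ) := by
        have := ID (j - pf)
        rwa [sub_add_cancel] at this
      have hCs := IC (j - pf + 1)
      rw [show j - pf + 1 + pf = j + 1 by ring] at hCs
      have hst := star (j - pf)
      have hcoef : lam (j - pf) * Stmt17Aux.Cc q α1 β1 δ1 ((j - pf + 1 : Fin (n + 3)) : ℕ)
          = Stmt17Aux.Cc q α2 β2 δ2 ((j + 1 : Fin (n + 3)) : ℕ) * lam (j - pf + 1) := by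
        have h' : α1 * (lam (j - pf) * Stmt17Aux.Cc q α1 β1 δ1 ((j - pf + 1 : Fin (n + 3)) : ℕ))
            = α1 * (Stmt17Aux.Cc q α2 β2 δ2 ((j + 1 : Fin (n + 3)) : ℕ) * lam (j - pf + 1)) := by
          calc α1 * (lam (j - pf) * Stmt17Aux.Cc q α1 β1 δ1 ((j - pf + 1 : Fin (n + 3)) : ℕ))
              = lam (j - pf) * (α1 * Stmt17Aux.Cc q α1 β1 δ1 ((j - pf + 1 : Fin (n + 3)) : ℕ)) := by
                ring
            _ = lam (j - pf) * (α2 * Stmt17Aux.Cc q α2 β2 δ2 ((j + 1 : Fin (n + 3)) : ℕ)) := by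
                rw [hCs]
            _ = Stmt17Aux.Cc q α2 β2 δ2 ((j + 1 : Fin (n + 3)) : ℕ) * (α2 * lam (j - pf)) := by
                ring
            _ = Stmt17Aux.Cc q α2 β2 δ2 ((j + 1 : Fin (n + 3)) : ℕ) * (α1 * lam (j - pf + 1)) := by
                rw [hst]
            _ = α1 * (Stmt17Aux.Cc q α2 β2 δ2 ((j + 1 : Fin (n + 3)) : ℕ) * lam (j - pf + 1)) := by
                ring
        exact mul_left_cancel₀ hα1 h'
      linear_combination x (j - pf + 1) * hcoef - lam (j - pf) * x (j - pf) * hD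
    have gen3 : ∀ x, F ((ρ1 (Ue3 K q)).unop x) = (ρ2 (Ue3 K q)).unop (F x) := by
      intro x; funext j
      rw [hFapp, a3, b3, hFapp]
      have hIE := IE (j - pf)
      rw [sub_add_cancel] at hIE
      rw [hIE]
      ring
    have genz : ∀ x, F ((ρ1 (Uz K q)).unop x) = (ρ2 (Uz K q)).unop (F x) := by
      intro x; funext j
      rw [hFapp, az, bz, hFapp, hγ]
      ring
    intro u
    suffices H : ∀ a : FreeAlgebra K (Fin 4), ∀ x : Fin (n + 3) → K,
        F ((ρ1 (RingQuot.mkAlgHom K (UqB2Rel K q) a)).unop x)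
          = (ρ2 (RingQuot.mkAlgHom K (UqB2Rel K q) a)).unop (F x) by
      obtain ⟨a, rfl⟩ := RingQuot.mkAlgHom_surjective K (UqB2Rel K q) u
      exact H a
    refine FreeAlgebra.induction K (Fin 4) ?_ ?_ ?_ ?_
    · intro r x
      simp only [AlgHom.commutes, MulOpposite.algebraMap_apply, MulOpposite.unop_op,
        Module.algebraMap_end_apply, map_smul]
    · intro i
      fin_cases i
      · exact gen1
      · exact gen2
      · exact gen3
      · exact genz
    · intro a b ha hb x
      simp only [map_mul, MulOpposite.unop_mul, Module.End.mul_apply]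
      rw [hb, ha]
    · intro a b ha hb x
      simp only [map_add, MulOpposite.unop_add, LinearMap.add_apply, map_add]
      rw [ha, hb]
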